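/- Let l ≥ 1, L = 2^l, F = [[1,0],[1,1]] over GF(2), and B_L = F^{⊗l} with rows and columns indexed 1,…,L. For 1 ≤ i ≤ L, the number of initial consecutive ones of the i-th row of B_L — that is, the largest c such that (B_L)_{i,j} = 1 for all 1 ≤ j ≤ c — equals 2^{v₂(i)}, where v₂(i) is the 2-adic valuation of i (the largest exponent a with 2^a dividing i). -/

import Mathlib

/-- The 2×2 polarization kernel `F = [[1,0],[1,1]]` over `GF(2)`. -/
def polarF : Matrix (Fin 2) (Fin 2) (ZMod 2) := !![1, 0; 1, 1]

/-- `polarB l` is the `l`-fold Kronecker power `F^{⊗l}` of the polarization kernel,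
with rows and columns reindexed by `Fin (2^l)` (row-major order), so that
`B_L = B_{L/2} ⊗ F` with `L = 2^l`. -/
def polarB : (l : ℕ) → Matrix (Fin (2 ^ l)) (Fin (2 ^ l)) (ZMod 2)
  | 0 => 1
  | l + 1 =>
      Matrix.reindex (finProdFinEquiv.trans (finCongr (pow_succ 2 l).symm))
        (finProdFinEquiv.trans (finCongr (pow_succ 2 l).symm))
        (Matrix.kroneckerMap (· * ·) (polarB l) polarF)

/-- `polarBt l i` is the `i`-th polarization submatrix `B̃_L(i)` (with `i` 1-indexed,
`L = 2^l`): the matrix obtained from `B_L` by replacing its first `i - 1` rows with zeros. -/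
def polarBt (l : ℕ) (i : ℕ) : Matrix (Fin (2 ^ l)) (Fin (2 ^ l)) (ZMod 2) :=
  Matrix.of fun r c => if i - 1 ≤ r.val then polarB l r c else 0

lemma polarF_entry (a b : Fin 2) : polarF a b = if b.val &&& a.val = b.val then 1 else 0 := by
  fin_cases a <;> fin_cases b <;> decide

lemma land_split (r c : ℕ) :
    c &&& r = c ↔ ((c / 2) &&& (r / 2) = c / 2 ∧ (c % 2) &&& (r % 2) = c % 2) := by
  constructor
  · intro h
    constructor
    · apply Nat.eq_of_testBit_eq; intro k
      rw [Nat.testBit_land, Nat.testBit_div_two, Nat.testBit_div_two, ← Nat.testBit_land, h]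
    · rcases Nat.mod_two_eq_zero_or_one c with hc | hc <;>
        rcases Nat.mod_two_eq_zero_or_one r with hr | hr <;> simp [hc, hr]
      have := congrArg (fun x => x.testBit 0) h
      simp [Nat.testBit_land, Nat.testBit_zero, hc, hr] at this
  · rintro ⟨h1, h2⟩
    apply Nat.eq_of_testBit_eq; intro k
    cases k with
    | zero =>
        have := congrArg (fun x => x.testBit 0) h2
        simpa [Nat.testBit_land, Nat.testBit_zero, Nat.mod_mod_of_dvd] using this
    | succ k =>
        have := congrArg (fun x => x.testBit k) h1
        simpa [Nat.testBit_land, Nat.testBit_div_two] using this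

lemma polarB_entry : ∀ (l : ℕ) (r c : Fin (2 ^ l)),
    polarB l r c = if c.val &&& r.val = c.val then 1 else 0 := by
  intro l
  induction l with
  | zero =>
      intro r c
      fin_cases r; fin_cases c
      simp [polarB, Matrix.one_apply]
  | succ l ih =>
      intro r c
      show (Matrix.reindex _ _ _) r c = _
      rw [Matrix.reindex_apply, Matrix.submatrix_apply, Matrix.kroneckerMap_apply]
      have e1 : ((finProdFinEquiv.trans (finCongr (pow_succ 2 l).symm)).symm r) =
          (⟨r.val / 2, by omega⟩, ⟨r.val % 2, by omega⟩) := by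
        apply finProdFinEquiv.injective
        apply (finCongr (pow_succ 2 l).symm).injective
        simp [Equiv.apply_symm_apply, finProdFinEquiv, Fin.ext_iff]
      have e2 : ((finProdFinEquiv.trans (finCongr (pow_succ 2 l).symm)).symm c) =
          (⟨c.val / 2, by omega⟩, ⟨c.val % 2, by omega⟩) := by
        apply finProdFinEquiv.injective
        apply (finCongr (pow_succ 2 l).symm).injective
        simp [Equiv.apply_symm_apply, finProdFinEquiv, Fin.ext_iff]
      rw [e1, e2]
      simp only [ih, polarF_entry]
      by_cases hA : (c.val / 2) &&& (r.val / 2) = c.val / 2 <;>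
        by_cases hB : (c.val % 2) &&& (r.val % 2) = c.val % 2 <;>
        simp [hA, hB, land_split, if_pos, if_neg]

theorem polarB_leading_ones (l : ℕ) (hl : 1 ≤ l) (i : ℕ) (h1 : 1 ≤ i) (hL : i ≤ 2 ^ l) :
    (∀ j : Fin (2 ^ l), j.val < 2 ^ padicValNat 2 i → polarB l ⟨i - 1, by omega⟩ j = 1) ∧
    (∀ j : Fin (2 ^ l), j.val = 2 ^ padicValNat 2 i → polarB l ⟨i - 1, by omega⟩ j ≠ 1) := by
  set t := padicValNat 2 i with ht
  have hd : 2 ^ t ∣ i := pow_padicValNat_dvd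
  have hnd : ¬ 2 ^ (t + 1) ∣ i := by
    haveI : Fact (Nat.Prime 2) := ⟨Nat.prime_two⟩
    exact pow_succ_padicValNat_not_dvd (by omega)
  obtain ⟨m, hm⟩ := hd
  have hpt : 0 < 2 ^ t := Nat.two_pow_pos t
  have hm1 : 1 ≤ m := by
    rcases Nat.eq_zero_or_pos m with h | h
    · subst h; simp at hm; omega
    · exact h
  have hmodd : m % 2 = 1 := by
    rcases Nat.mod_two_eq_zero_or_one m with h | h
    · exfalso
      apply hnd
      obtain ⟨m', rfl⟩ : ∃ m', m = 2 * m' := ⟨m / 2, by omega⟩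
      exact ⟨m', by rw [hm, pow_succ]; ring⟩
    · exact h
  have hr : i - 1 = 2 ^ t * (m - 1) + (2 ^ t - 1) := by
    have : m = m - 1 + 1 := by omega
    rw [this, Nat.mul_add, Nat.mul_one] at hm
    omega
  have hrmod : (i - 1) % 2 ^ t = 2 ^ t - 1 := by
    rw [hr, add_comm, Nat.add_mul_mod_self_left, Nat.mod_eq_of_lt (by omega)]
  have hrdiv : (i - 1) / 2 ^ t = m - 1 := by
    rw [hr, add_comm, Nat.add_mul_div_left _ _ hpt, Nat.div_eq_of_lt (by omega)]
    omega
  constructor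
  · intro j hj
    rw [polarB_entry]
    rw [if_pos]
    apply Nat.eq_of_testBit_eq
    intro k
    rw [Nat.testBit_land]
    cases hjk : j.val.testBit k with
    | false => simp
    | true =>
        have hk : k < t := by
          by_contra hk
          have : j.val < 2 ^ k := lt_of_lt_of_le hj (Nat.pow_le_pow_right (by norm_num) (by omega))
          rw [Nat.testBit_lt_two_pow this] at hjk
          exact Bool.noConfusion hjk
        have : (i - 1).testBit k = true := by
          have h1 : ((i - 1) % 2 ^ t).testBit k = (i - 1).testBit k := by
            rw [Nat.testBit_mod_two_pow]
            simp [hk]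
          rw [← h1, hrmod, Nat.testBit_two_pow_sub_one]
          simp [hk]
        simp [this]
  · intro j hj
    rw [polarB_entry]
    have hbit : (i - 1).testBit t = false := by
      rw [Nat.testBit_eq_decide_div_mod_eq, hrdiv]
      simp
      omega
    rw [if_neg]
    · decide
    · rw [hj, Nat.two_pow_and, hbit]
      simp
      omega
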